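/- Let 𝒳 be a finite nonempty set and Q a probability measure on 𝒳 × {0,1} × {0,1} with coordinates (X, A, Y) such that Q(X=x, A=a, Y=y) > 0 for all x, a, y; let ρ ∈ (0,1). Define μ_a(x) = Q(Y=1|X=x,A=a), π_a(x) = Q(A=a|X=x), η(x) = Q(Y=1|X=x), ω = Q(Y=1), ω_y = Q(Y=y), η_y(x) = Q(Y=y|X=x), logit(t) = log(t/(1−t)), ψ_{a,y} = E_Q[logit(μ_a(X)) | Y=y], and for a, y ∈ {0,1} the influence function φ_{a,y}(x,a',y') = logit(μ_a(x))·1{y'=y}/ω_y + (η_y(x)/ω_y)·1{a'=a}·(y' − μ_a(x))/(π_a(x)·μ_a(x)·(1−μ_a(x))) − ψ_{a,y}·1{y'=y}/ω_y believed evaluated at observation (x,a',y'). Define φ = ρ·(φ_{1,1} − φ_{0,1}) + (1−ρ)·(φ_{1,0} − φ_{0,0}), the distribution-corrected log conditional odds ratio Ψ(x,y) = (y·ρ/ω + (1−y)·(1−ρ)/(1−ω))·(logit(μ₁(x)) − logit(μ₀(x))), and the distribution-corrected aggregate log odds ratio Ψ*(y) = y·(ρ/ω)·(ψ_{1,1}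 − ψ_{0,1}) + (1−y)·((1−ρ)/(1−ω))·(ψ_{1,0} − ψ_{0,0}). Then the nonparametric efficiency bound decomposition holds: Var_Q(φ(X,A,Y)) = Var_Q(Ψ(X,Y)) + Var_Q(Ψ*(Y)) − 2·Cov_Q(Ψ(X,Y), Ψ*(Y)) + E_Q[ (1/(π₁(X)·μ₁(X)·(1−μ₁(X))) + 1/(π₀(X)·μ₀(X)·(1−μ₀(X)))) · ( ((ρ−ω)/(ω(1−ω)))·η(X) + (1−ρ)/(1−ω) )² ]. -/

import Mathlib

open Finset

/-- `logit t = log (t / (1 - t))`. -/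
noncomputable def logit (t : ℝ) : ℝ := Real.log (t / (1 - t))

/-- Numeric value of a binary variable: `true ↦ 1`, `false ↦ 0`. -/
noncomputable def b2r (b : Bool) : ℝ := if b then 1 else 0

/-- `μ_a(x) = Q(Y=1 | X=x, A=a)` for a data distribution `Q` on `𝒳 × {0,1} × {0,1}`
(coordinates `(X, A, Y)`, `true = 1`, `false = 0`). -/
noncomputable def mu {𝒳 : Type*} (Q : 𝒳 × Bool × Bool → ℝ) (a : Bool) (x : 𝒳) : ℝ :=
  Q (x, a, true) / (Q (x, a, true) + Q (x, a, false))

/-- `π_a(x) = Q(A=a | X=x)`. -/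
noncomputable def piA {𝒳 : Type*} (Q : 𝒳 × Bool × Bool → ℝ) (a : Bool) (x : 𝒳) : ℝ :=
  (Q (x, a, true) + Q (x, a, false)) / ∑ a' : Bool, ∑ y' : Bool, Q (x, a', y')

/-- `η_y(x) = Q(Y=y | X=x)`. -/
noncomputable def etaY {𝒳 : Type*} (Q : 𝒳 × Bool × Bool → ℝ) (y : Bool) (x : 𝒳) : ℝ :=
  (∑ a' : Bool, Q (x, a', y)) / ∑ a' : Bool, ∑ y' : Bool, Q (x, a', y')

/-- `ω_y = Q(Y=y)`. -/
noncomputable def omegaY {𝒳 : Type*} [Fintype 𝒳] (Q : 𝒳 × Bool × Bool → ℝ) (y : Bool) : ℝ :=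
  ∑ x, ∑ a' : Bool, Q (x, a', y)

/-- `ψ_{a,y} = E_Q[logit(μ_a(X)) | Y=y]`. -/
noncomputable def psi {𝒳 : Type*} [Fintype 𝒳] (Q : 𝒳 × Bool × Bool → ℝ) (a y : Bool) : ℝ :=
  (∑ x, (∑ a' : Bool, Q (x, a', y)) * logit (mu Q a x)) / omegaY Q y

/-- The influence function `φ_{a,y}` of `ψ_{a,y}`, evaluated at an observation `z = (x, a', y')`:
`φ_{a,y}(x,a',y') = logit(μ_a(x))·1{y'=y}/ω_y
  + (η_y(x)/ω_y)·1{a'=a}·(y' − μ_a(x))/(π_a(x)·μ_a(x)·(1−μ_a(x))) − ψ_{a,y}·1{y'=y}/ω_y`. -/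
noncomputable def phiAY {𝒳 : Type*} [Fintype 𝒳] (Q : 𝒳 × Bool × Bool → ℝ) (a y : Bool)
    (z : 𝒳 × Bool × Bool) : ℝ :=
  logit (mu Q a z.1) * (if z.2.2 = y then (1 : ℝ) else 0) / omegaY Q y +
    etaY Q y z.1 / omegaY Q y *
      ((if z.2.1 = a then (1 : ℝ) else 0) * (b2r z.2.2 - mu Q a z.1) /
        (piA Q a z.1 * mu Q a z.1 * (1 - mu Q a z.1))) -
    psi Q a y * (if z.2.2 = y then (1 : ℝ) else 0) / omegaY Q y

/-- Expectation under `Q`. -/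
noncomputable def EQ {𝒳 : Type*} [Fintype 𝒳] (Q : 𝒳 × Bool × Bool → ℝ)
    (f : 𝒳 × Bool × Bool → ℝ) : ℝ :=
  ∑ z : 𝒳 × Bool × Bool, Q z * f z

/-- Variance under `Q`. -/
noncomputable def varQ {𝒳 : Type*} [Fintype 𝒳] (Q : 𝒳 × Bool × Bool → ℝ)
    (f : 𝒳 × Bool × Bool → ℝ) : ℝ :=
  EQ Q (fun z => f z ^ 2) - (EQ Q f) ^ 2

/-- Covariance under `Q`. -/
noncomputable def covQ {𝒳 : Type*} [Fintype 𝒳] (Q : 𝒳 × Bool × Bool → ℝ)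
    (f g : 𝒳 × Bool × Bool → ℝ) : ℝ :=
  EQ Q (fun z => f z * g z) - EQ Q f * EQ Q g

set_option linter.unusedSectionVars false
set_option linter.unusedVariables false

section Aux
variable {𝒳 : Type*} [Fintype 𝒳] (Q : 𝒳 × Bool × Bool → ℝ)

lemma qx_pos (hQpos : ∀ z, 0 < Q z) (x : 𝒳) :
    0 < ∑ a' : Bool, ∑ y' : Bool, Q (x, a', y') := by
  refine Finset.sum_pos (fun a _ => Finset.sum_pos (fun y _ => hQpos _) univ_nonempty) univ_nonempty

lemma key3 (hQpos : ∀ z, 0 < Q z) (a : Bool) (x : 𝒳) :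
    1 / (piA Q a x * mu Q a x * (1 - mu Q a x)) =
      (1 / Q (x, a, true) + 1 / Q (x, a, false)) * (∑ a' : Bool, ∑ y' : Bool, Q (x, a', y')) := by
  have ht := (hQpos (x, a, true)).ne'
  have hf := (hQpos (x, a, false)).ne'
  have hp : Q (x, a, true) + Q (x, a, false) ≠ 0 := (add_pos (hQpos _) (hQpos _)).ne'
  have hq := (qx_pos Q hQpos x).ne'
  rw [piA, mu]
  field_simp
  ring_nf
  field_simp
  ring

lemma key1 (hQpos : ∀ z, 0 < Q z) (a y : Bool) (x : 𝒳) :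
    Q (x, a, y) * ((b2r y - mu Q a x) / (piA Q a x * mu Q a x * (1 - mu Q a x))) =
      (if y then (1:ℝ) else -1) * (∑ a' : Bool, ∑ y' : Bool, Q (x, a', y')) := by
  have ht := (hQpos (x, a, true)).ne'
  have hf := (hQpos (x, a, false)).ne'
  have hp : Q (x, a, true) + Q (x, a, false) ≠ 0 := (add_pos (hQpos _) (hQpos _)).ne'
  have hq := (qx_pos Q hQpos x).ne'
  cases y <;> rw [piA, mu] <;> simp only [b2r, if_true, if_false, Bool.false_eq_true] <;>
    field_simp <;> ring_nf <;> field_simp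

lemma key2 (hQpos : ∀ z, 0 < Q z) (a y : Bool) (x : 𝒳) :
    Q (x, a, y) * ((b2r y - mu Q a x) / (piA Q a x * mu Q a x * (1 - mu Q a x))) ^ 2 =
      (∑ a' : Bool, ∑ y' : Bool, Q (x, a', y')) ^ 2 / Q (x, a, y) := by
  have ht := (hQpos (x, a, true)).ne'
  have hf := (hQpos (x, a, false)).ne'
  have hp : Q (x, a, true) + Q (x, a, false) ≠ 0 := (add_pos (hQpos _) (hQpos _)).ne'
  have hq := (qx_pos Q hQpos x).ne'
  cases y <;> rw [piA, mu] <;> simp only [b2r, if_true, if_false, Bool.false_eq_true] <;>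
    field_simp <;> ring_nf <;> field_simp

/-- Coefficient `c(x) = ρ·η₁(x)/ω₁ + (1−ρ)·η₀(x)/ω₀`. -/
noncomputable def Cfun (Q : 𝒳 × Bool × Bool → ℝ) (ρ : ℝ) (x : 𝒳) : ℝ :=
  ρ * etaY Q true x / omegaY Q true + (1 - ρ) * etaY Q false x / omegaY Q false

/-- Augmentation (residual) part of the influence function. -/
noncomputable def Rfun (Q : 𝒳 × Bool × Bool → ℝ) (ρ : ℝ) (z : 𝒳 × Bool × Bool) : ℝ :=
  Cfun Q ρ z.1 * ((if z.2.1 then (1:ℝ) else -1) * ((b2r z.2.2 - mu Q z.2.1 z.1) /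
    (piA Q z.2.1 z.1 * mu Q z.2.1 z.1 * (1 - mu Q z.2.1 z.1))))

lemma orth (hQpos : ∀ z, 0 < Q z) (ρ : ℝ) (x : 𝒳) (y : Bool) :
    ∑ a : Bool, Q (x, a, y) * Rfun Q ρ (x, a, y) = 0 := by
  have h1 := key1 Q hQpos true y x
  have h0 := key1 Q hQpos false y x
  simp only [Fintype.sum_bool, Rfun, reduceIte, Bool.false_eq_true, if_false]
  linear_combination Cfun Q ρ x * h1 - Cfun Q ρ x * h0

lemma secmom (hQpos : ∀ z, 0 < Q z) (ρ : ℝ) (x : 𝒳) :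
    ∑ a : Bool, ∑ y : Bool, Q (x, a, y) * Rfun Q ρ (x, a, y) ^ 2 =
      (∑ a' : Bool, ∑ y' : Bool, Q (x, a', y')) *
        ((1 / (piA Q true x * mu Q true x * (1 - mu Q true x)) +
          1 / (piA Q false x * mu Q false x * (1 - mu Q false x))) * Cfun Q ρ x ^ 2) := by
  have k2tt := key2 Q hQpos true true x
  have k2tf := key2 Q hQpos true false x
  have k2ft := key2 Q hQpos false true x
  have k2ff := key2 Q hQpos false false x
  have k3t := key3 Q hQpos true x
  have k3f := key3 Q hQpos false x
  simp only [Fintype.sum_bool, Rfun, reduceIte, Bool.false_eq_true, if_false]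
  set q := ∑ a' : Bool, ∑ y' : Bool, Q (x, a', y') with hq
  have hq4 : q = Q (x, true, true) + Q (x, true, false) + (Q (x, false, true) + Q (x, false, false)) := by
    rw [hq, Fintype.sum_bool, Fintype.sum_bool, Fintype.sum_bool]
  linear_combination (Cfun Q ρ x ^ 2) * (k2tt + k2tf + k2ft + k2ff) -
    q * Cfun Q ρ x ^ 2 * (k3t + k3f) +
    Cfun Q ρ x ^ 2 * (1 / (piA Q true x * mu Q true x * (1 - mu Q true x)) +
      1 / (piA Q false x * mu Q false x * (1 - mu Q false x))) * hq4


lemma omegaY_add_one (hQsum : ∑ z : 𝒳 × Bool × Bool, Q z = 1) :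
    omegaY Q false = 1 - omegaY Q true := by
  have h : omegaY Q true + omegaY Q false = 1 := by
    rw [← hQsum]
    simp only [omegaY, Fintype.sum_prod_type, Fintype.sum_bool, ← Finset.sum_add_distrib]
    exact Finset.sum_congr rfl fun x _ => by ring
  linarith

lemma etaY_false_eq (hQpos : ∀ z, 0 < Q z) (x : 𝒳) :
    etaY Q false x = 1 - etaY Q true x := by
  have hq := (qx_pos Q hQpos x).ne'
  rw [etaY, etaY, eq_sub_iff_add_eq, ← add_div, div_eq_one_iff_eq hq]
  simp only [Fintype.sum_bool]
  ring

lemma omegaY_pos [Nonempty 𝒳] (hQpos : ∀ z, 0 < Q z) (y : Bool) : 0 < omegaY Q y := by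
  exact Finset.sum_pos (fun x _ => Finset.sum_pos (fun a _ => hQpos _) univ_nonempty) univ_nonempty

lemma Cfun_eq [Nonempty 𝒳] (hQsum : ∑ z : 𝒳 × Bool × Bool, Q z = 1)
    (hQpos : ∀ z, 0 < Q z) (ρ : ℝ) (x : 𝒳) :
    Cfun Q ρ x = (ρ - omegaY Q true) / (omegaY Q true * (1 - omegaY Q true)) * etaY Q true x +
      (1 - ρ) / (1 - omegaY Q true) := by
  have h1 : (0:ℝ) < omegaY Q true := omegaY_pos Q hQpos true
  have h2 : (0:ℝ) < 1 - omegaY Q true := by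
    rw [← omegaY_add_one Q hQsum]; exact omegaY_pos Q hQpos false
  rw [Cfun, omegaY_add_one Q hQsum, etaY_false_eq Q hQpos]
  field_simp
  ring

lemma phi_decomp (hQsum : ∑ z : 𝒳 × Bool × Bool, Q z = 1) (ρ : ℝ) (z : 𝒳 × Bool × Bool) :
    ρ * (phiAY Q true true z - phiAY Q false true z) +
      (1 - ρ) * (phiAY Q true false z - phiAY Q false false z) =
    (b2r z.2.2 * (ρ / omegaY Q true) + (1 - b2r z.2.2) * ((1 - ρ) / (1 - omegaY Q true))) *
        (logit (mu Q true z.1) - logit (mu Q false z.1)) -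
      (b2r z.2.2 * (ρ / omegaY Q true) * (psi Q true true - psi Q false true) +
        (1 - b2r z.2.2) * ((1 - ρ) / (1 - omegaY Q true)) * (psi Q true false - psi Q false false)) +
      Rfun Q ρ z := by
  obtain ⟨x, a, y⟩ := z
  have h := omegaY_add_one Q hQsum
  cases a <;> cases y <;>
    simp only [phiAY, Rfun, Cfun, b2r, reduceIte, Bool.false_eq_true, Bool.true_eq_false, eq_self_iff_true, if_false, if_true] <;>
    rw [h] <;> ring

lemma EQ_g_R (hQpos : ∀ z, 0 < Q z) (ρ : ℝ) (g : 𝒳 → Bool → ℝ) :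
    EQ Q (fun z => g z.1 z.2.2 * Rfun Q ρ z) = 0 := by
  simp only [EQ, Fintype.sum_prod_type]
  refine Finset.sum_eq_zero fun x _ => ?_
  rw [Finset.sum_comm]
  refine Finset.sum_eq_zero fun y _ => ?_
  have h := orth Q hQpos ρ x y
  calc ∑ a : Bool, Q (x, a, y) * (g x y * Rfun Q ρ (x, a, y))
      = g x y * ∑ a : Bool, Q (x, a, y) * Rfun Q ρ (x, a, y) := by
        rw [Finset.mul_sum]; exact Finset.sum_congr rfl fun a _ => by ring
    _ = 0 := by rw [h, mul_zero]

lemma EQ_R_zero (hQpos : ∀ z, 0 < Q z) (ρ : ℝ) : EQ Q (Rfun Q ρ) = 0 := by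
  have h := EQ_g_R Q hQpos ρ (fun _ _ => 1)
  simpa using h

lemma EQ_R_sq [Nonempty 𝒳] (hQsum : ∑ z : 𝒳 × Bool × Bool, Q z = 1)
    (hQpos : ∀ z, 0 < Q z) (ρ : ℝ) :
    EQ Q (fun z => Rfun Q ρ z ^ 2) =
      EQ Q (fun z =>
        (1 / (piA Q true z.1 * mu Q true z.1 * (1 - mu Q true z.1)) +
            1 / (piA Q false z.1 * mu Q false z.1 * (1 - mu Q false z.1))) *
          ((ρ - omegaY Q true) / (omegaY Q true * (1 - omegaY Q true)) * etaY Q true z.1 +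
            (1 - ρ) / (1 - omegaY Q true)) ^ 2) := by
  simp only [EQ, Fintype.sum_prod_type]
  refine Finset.sum_congr rfl fun x _ => ?_
  have hs := secmom Q hQpos ρ x
  have hc := Cfun_eq Q hQsum hQpos ρ x
  calc (∑ a : Bool, ∑ y : Bool, Q (x, a, y) * Rfun Q ρ (x, a, y) ^ 2)
      = (∑ a' : Bool, ∑ y' : Bool, Q (x, a', y')) *
        ((1 / (piA Q true x * mu Q true x * (1 - mu Q true x)) +
          1 / (piA Q false x * mu Q false x * (1 - mu Q false x))) * Cfun Q ρ x ^ 2) := hs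
    _ = _ := by
        rw [hc]
        simp only [← Finset.sum_mul]

lemma var_decomp (f g h : 𝒳 × Bool × Bool → ℝ)
    (hh0 : EQ Q h = 0)
    (hfh : EQ Q (fun z => f z * h z) = 0)
    (hgh : EQ Q (fun z => g z * h z) = 0) :
    varQ Q (fun z => f z - g z + h z) =
      varQ Q f + varQ Q g - 2 * covQ Q f g + EQ Q (fun z => h z ^ 2) := by
  simp only [varQ, covQ, EQ] at *
  have e1 : ∑ z : 𝒳 × Bool × Bool, Q z * (f z - g z + h z) ^ 2 =
      ∑ z : 𝒳 × Bool × Bool, Q z * f z ^ 2 + ∑ z : 𝒳 × Bool × Bool, Q z * g z ^ 2 +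
        ∑ z : 𝒳 × Bool × Bool, Q z * h z ^ 2 - 2 * ∑ z : 𝒳 × Bool × Bool, Q z * (f z * g z) +
        2 * ∑ z : 𝒳 × Bool × Bool, Q z * (f z * h z) -
        2 * ∑ z : 𝒳 × Bool × Bool, Q z * (g z * h z) := by
    simp only [Finset.mul_sum, ← Finset.sum_add_distrib, ← Finset.sum_sub_distrib]
    exact Finset.sum_congr rfl fun z _ => by ring
  have e2 : ∑ z : 𝒳 × Bool × Bool, Q z * (f z - g z + h z) =
      ∑ z : 𝒳 × Bool × Bool, Q z * f z - ∑ z : 𝒳 × Bool × Bool, Q z * g z +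
        ∑ z : 𝒳 × Bool × Bool, Q z * h z := by
    simp only [← Finset.sum_add_distrib, ← Finset.sum_sub_distrib]
    exact Finset.sum_congr rfl fun z _ => by ring
  rw [e1, e2, hh0, hfh, hgh]
  ring
end Aux


/-- nonparametric efficiency bound decomposition for the (log) geometric odds
ratio under outcome-dependent sampling.  With `φ = ρ·(φ_{1,1} − φ_{0,1}) + (1−ρ)·(φ_{1,0} −
φ_{0,0})`, the distribution-corrected log conditional odds ratio `Ψ(x,y)` and the
distribution-corrected aggregate log odds ratio `Ψ*(y)`,
`Var_Q(φ) = Var_Q(Ψ) + Var_Q(Ψ*) − 2·Cov_Q(Ψ, Ψ*) + E_Q[(1/(π₁μ₁(1−μ₁)) + 1/(π₀μ₀(1−μ₀)))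
  ·(((ρ−ω)/(ω(1−ω)))·η(X) + (1−ρ)/(1−ω))²]`. -/
theorem efficiency_bound_decomposition
    {𝒳 : Type*} [Fintype 𝒳] [Nonempty 𝒳]
    (Q : 𝒳 × Bool × Bool → ℝ) (ρ : ℝ)
    (hQsum : ∑ z : 𝒳 × Bool × Bool, Q z = 1)
    (hQpos : ∀ z, 0 < Q z)
    (hρ : ρ ∈ Set.Ioo (0 : ℝ) 1) :
    let ω : ℝ := omegaY Q true
    let φ : 𝒳 × Bool × Bool → ℝ := fun z =>
      ρ * (phiAY Q true true z - phiAY Q false true z) +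
        (1 - ρ) * (phiAY Q true false z - phiAY Q false false z)
    let Ψ : 𝒳 × Bool × Bool → ℝ := fun z =>
      (b2r z.2.2 * (ρ / ω) + (1 - b2r z.2.2) * ((1 - ρ) / (1 - ω))) *
        (logit (mu Q true z.1) - logit (mu Q false z.1))
    let Ψs : 𝒳 × Bool × Bool → ℝ := fun z =>
      b2r z.2.2 * (ρ / ω) * (psi Q true true - psi Q false true) +
        (1 - b2r z.2.2) * ((1 - ρ) / (1 - ω)) * (psi Q true false - psi Q false false)
    varQ Q φ = varQ Q Ψ + varQ Q Ψs - 2 * covQ Q Ψ Ψs +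
      EQ Q (fun z =>
        (1 / (piA Q true z.1 * mu Q true z.1 * (1 - mu Q true z.1)) +
            1 / (piA Q false z.1 * mu Q false z.1 * (1 - mu Q false z.1))) *
          ((ρ - ω) / (ω * (1 - ω)) * etaY Q true z.1 + (1 - ρ) / (1 - ω)) ^ 2) := by
  intro ω φ Ψ Ψs
  have hφ : φ = fun z => Ψ z - Ψs z + Rfun Q ρ z := funext fun z => phi_decomp Q hQsum ρ z
  have h0 : EQ Q (Rfun Q ρ) = 0 := EQ_R_zero Q hQpos ρ
  have hfh : EQ Q (fun z => Ψ z * Rfun Q ρ z) = 0 :=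
    EQ_g_R Q hQpos ρ (fun x y =>
      (b2r y * (ρ / ω) + (1 - b2r y) * ((1 - ρ) / (1 - ω))) *
        (logit (mu Q true x) - logit (mu Q false x)))
  have hgh : EQ Q (fun z => Ψs z * Rfun Q ρ z) = 0 :=
    EQ_g_R Q hQpos ρ (fun _ y =>
      b2r y * (ρ / ω) * (psi Q true true - psi Q false true) +
        (1 - b2r y) * ((1 - ρ) / (1 - ω)) * (psi Q true false - psi Q false false))
  have h2 : EQ Q (fun z => Rfun Q ρ z ^ 2) =
      EQ Q (fun z =>
        (1 / (piA Q true z.1 * mu Q true z.1 * (1 - mu Q true z.1)) +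
            1 / (piA Q false z.1 * mu Q false z.1 * (1 - mu Q false z.1))) *
          ((ρ - ω) / (ω * (1 - ω)) * etaY Q true z.1 + (1 - ρ) / (1 - ω)) ^ 2) :=
    EQ_R_sq Q hQsum hQpos ρ
  rw [hφ, var_decomp Q Ψ Ψs (Rfun Q ρ) h0 hfh hgh, h2]
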